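/- Let L : P → C be a locally cartesian reflective localization of a locally cartesian closed category P, with fully faithful inclusion G. Then for every object T of P, the induced functor C/LT → P/T (pullback along the unit η_T of the inclusion of a local slice) is injective on isomorphism classes; consequently, if p : X → S is a map in C such that for every T in C the map Hom_C(T, S) → {iso classes of objects of C/T}, f ↦ [f*p], is injective, then for every T in P the map Hom_P(T, S) → {iso classes of objects of P/T}, f ↦ [f*p], is also injective. -/

import Mathlib

open CategoryTheory CategoryTheory.Limits

/-- Let `L : P ⥤ C` be a locally cartesian reflective localization (fully faithful inclusion
`G`, unit `η`) of a locally cartesian closed category `P`.  Then (1) for every `T : P` the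
induced functor `C/LT ⥤ P/T` (inclusion on slices followed by pullback along `η_T`) is
injective on isomorphism classes; and (2) if `p : X ⟶ S` in `C` is univalent in `C` (for
every `T : C`, `f ↦ [f^*p]` is injective from `Hom_C(T, S)` to isomorphism classes of
`C/T`), then `p` is univalent in `P` (for every `T : P`, `f ↦ [f^*(Gp)]` is injective from
`Hom_P(T, GS)` to isomorphism classes of `P/T`). -/
theorem univalent_of_loc_cartesian_localization
    {P C : Type*} [Category P] [Category C] [HasPullbacks P] [HasPullbacks C]
    (L : P ⥤ C) (G : C ⥤ P) (adj : L ⊣ G) [G.Full] [G.Faithful]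
    (hloc : ∀ {T S : C} (f : T ⟶ S) {X Y : P}
      (p : X ⟶ G.obj S) (p' : Y ⟶ G.obj T) (q : Y ⟶ X),
      IsPullback q p' p (G.map f) → IsIso (L.map p) → IsIso (L.map p')) :
    (∀ (T : P) (a b : Over (L.obj T)),
      Nonempty ((Over.post G ⋙ Over.pullback (adj.unit.app T)).obj a ≅
        (Over.post G ⋙ Over.pullback (adj.unit.app T)).obj b) → Nonempty (a ≅ b)) ∧
    (∀ {X S : C} (p : X ⟶ S),
      (∀ (T : C) (f g : T ⟶ S),
        Nonempty (Over.mk (pullback.snd p f) ≅ Over.mk (pullback.snd p g)) → f = g) →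
      ∀ (T : P) (f g : T ⟶ G.obj S),
        Nonempty (Over.mk (pullback.snd (G.map p) f) ≅ Over.mk (pullback.snd (G.map p) g)) →
          f = g) := by
  
  have hη : ∀ (T : P), IsIso (L.map (adj.unit.app T)) := fun T =>
    ⟨adj.counit.app (L.obj T), adj.left_triangle_components T,
      by rw [← cancel_mono (adj.counit.app (L.obj T))]; simp⟩
  -- key iso computation for part 1
  have hfst : ∀ (T : P) (a : Over (L.obj T)),
      IsIso (L.map (pullback.fst (G.map a.hom) (adj.unit.app T))) := by
    intro T a
    exact hloc a.hom (adj.unit.app T) (pullback.fst (G.map a.hom) (adj.unit.app T))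
      (pullback.snd (G.map a.hom) (adj.unit.app T))
      ((IsPullback.of_hasPullback (G.map a.hom) (adj.unit.app T)).flip) (hη T)
  have hφ : ∀ (T : P) (a : Over (L.obj T)),
      (L.map (pullback.fst (G.map a.hom) (adj.unit.app T)) ≫ adj.counit.app a.left) ≫ a.hom
        = L.map (pullback.snd (G.map a.hom) (adj.unit.app T)) := by
    intro T a
    have h1 : adj.counit.app a.left ≫ a.hom = L.map (G.map a.hom) ≫ adj.counit.app (L.obj T) :=
      (adj.counit_naturality a.hom).symm
    rw [Category.assoc, h1, ← Category.assoc, ← L.map_comp, pullback.condition,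
      L.map_comp, Category.assoc]
    simp
  have part1 : ∀ (T : P) (a b : Over (L.obj T)),
      Nonempty ((Over.post G ⋙ Over.pullback (adj.unit.app T)).obj a ≅
        (Over.post G ⋙ Over.pullback (adj.unit.app T)).obj b) → Nonempty (a ≅ b) := by
    intro T a b ⟨i⟩
    haveI := hfst T a
    haveI := hfst T b
    let φa : L.obj (pullback (G.map a.hom) (adj.unit.app T)) ⟶ a.left :=
      L.map (pullback.fst (G.map a.hom) (adj.unit.app T)) ≫ adj.counit.app a.left
    let φb : L.obj (pullback (G.map b.hom) (adj.unit.app T)) ⟶ b.left :=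
      L.map (pullback.fst (G.map b.hom) (adj.unit.app T)) ≫ adj.counit.app b.left
    haveI : IsIso φa := inferInstance
    haveI : IsIso φb := inferInstance
    let j : pullback (G.map a.hom) (adj.unit.app T) ≅ pullback (G.map b.hom) (adj.unit.app T) :=
      (Over.forget T).mapIso i
    have hj : j.hom ≫ pullback.snd (G.map b.hom) (adj.unit.app T)
        = pullback.snd (G.map a.hom) (adj.unit.app T) := Over.w i.hom
    refine ⟨Over.isoMk ((asIso φa).symm ≪≫ L.mapIso j ≪≫ asIso φb) ?_⟩
    dsimp
    rw [Category.assoc, Category.assoc, hφ T b, IsIso.inv_comp_eq, hφ T a,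
      ← L.map_comp, hj]
  refine ⟨part1, ?_⟩
  intro X S p hp T f g ⟨i⟩
  haveI := adj.rightAdjoint_preservesLimits
  have key : ∀ (f : T ⟶ G.obj S) (f' : L.obj T ⟶ S), f = adj.unit.app T ≫ G.map f' →
      Nonempty (Over.mk (pullback.snd (G.map p) f) ≅
        (Over.post G ⋙ Over.pullback (adj.unit.app T)).obj (Over.mk (pullback.snd p f'))) := by
    intro f f' hf
    subst hf
    refine ⟨((Over.pullbackComp (adj.unit.app T) (G.map f')).app (Over.mk (G.map p))) ≪≫
      (Over.pullback (adj.unit.app T)).mapIso ?_⟩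
    exact Over.isoMk (PreservesPullback.iso G p f').symm
      (by dsimp [Over.post]; simp [Iso.inv_comp_eq])
  obtain ⟨f', hf⟩ : ∃ f', f = adj.unit.app T ≫ G.map f' :=
    ⟨(adj.homEquiv T S).symm f, by
      conv_lhs => rw [← (adj.homEquiv T S).apply_symm_apply f]
      rw [adj.homEquiv_unit]⟩
  obtain ⟨g', hg⟩ : ∃ g', g = adj.unit.app T ≫ G.map g' :=
    ⟨(adj.homEquiv T S).symm g, by
      conv_lhs => rw [← (adj.homEquiv T S).apply_symm_apply g]
      rw [adj.homEquiv_unit]⟩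
  obtain ⟨ia⟩ := key f f' hf
  obtain ⟨ib⟩ := key g g' hg
  have := hp (L.obj T) f' g' (part1 T _ _ ⟨ia.symm ≪≫ i ≪≫ ib⟩)
  rw [hf, hg, this]
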